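/- arXiv:1109.0274 — 2 statements merged into one kernel-verified Lean document; each statement's English description precedes it below -/
import Mathlib

section
/- The function g(θ) = θ/2 - 1/2 + (θ/2)√(1 - 2/θ) + log(1/2 - (1/2)√(1 - 2/θ)) is strictly increasing on the interval [2, ∞). -/
noncomputable def g (θ : ℝ) : ℝ :=
  θ / 2 - 1 / 2 + θ / 2 * Real.sqrt (1 - 2 / θ) +
    Real.log (1 / 2 - 1 / 2 * Real.sqrt (1 - 2 / θ))

noncomputable def f (s : ℝ) : ℝ := 1 / (1 - s) - 1 / 2 + Real.log (1 / 2 - 1 / 2 * s)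

lemma f_hasDeriv {x : ℝ} (hx : x < 1) : HasDerivAt f (x / (1 - x) ^ 2) x := by
  have h1 : (0:ℝ) < 1 - x := by linarith
  have h2 : (0:ℝ) < 1 / 2 - 1 / 2 * x := by linarith
  have d1 : HasDerivAt (fun s : ℝ => 1 - s) (-1) x := by
    exact (hasDerivAt_id' x).const_sub 1
  have d2 : HasDerivAt (fun s : ℝ => 1 / (1 - s)) (1 / (1 - x) ^ 2) x := by
    have := d1.inv (ne_of_gt h1); simp only [one_div]; convert this using 1; rfl; rfl; rfl; ring
  have d3 : HasDerivAt (fun s : ℝ => 1 / 2 - 1 / 2 * s) (-(1/2)) x := by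
    have := ((hasDerivAt_id' x).const_mul ((1:ℝ)/2)).const_sub ((1:ℝ)/2); convert this using 1; rfl; rfl; ring
  have d4 : HasDerivAt (fun s : ℝ => Real.log (1 / 2 - 1 / 2 * s)) (-(1/2) / (1/2 - 1/2*x)) x :=
    d3.log (ne_of_gt h2)
  have := (d2.sub_const (1/2)).add d4
  convert this using 1; rfl; rfl; rfl
  field_simp
  ring

lemma f_mono : StrictMonoOn f (Set.Ico (0:ℝ) 1) := by
  apply strictMonoOn_of_deriv_pos (convex_Ico 0 1)
  · intro x hx
    exact (f_hasDeriv hx.2).continuousAt.continuousWithinAt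
  · intro x hx
    rw [interior_Ico] at hx
    rw [(f_hasDeriv hx.2).deriv]
    have h1 : (0:ℝ) < 1 - x := by linarith [hx.2]
    exact div_pos hx.1 (by positivity)

lemma sqrt_mem {θ : ℝ} (hθ : 2 ≤ θ) : Real.sqrt (1 - 2 / θ) ∈ Set.Ico (0:ℝ) 1 := by
  have hθ0 : (0:ℝ) < θ := by linarith
  constructor
  · exact Real.sqrt_nonneg _
  · have h1 : 1 - 2 / θ < 1 := by
      have : 0 < 2 / θ := by positivity
      linarith
    calc Real.sqrt (1 - 2 / θ) < Real.sqrt 1 := by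
          apply Real.sqrt_lt_sqrt _ h1
          rw [sub_nonneg, div_le_one hθ0]; exact hθ
      _ = 1 := Real.sqrt_one

lemma g_eq_f {θ : ℝ} (hθ : 2 ≤ θ) : g θ = f (Real.sqrt (1 - 2 / θ)) := by
  have hθ0 : (0:ℝ) < θ := by linarith
  set s := Real.sqrt (1 - 2 / θ) with hs
  have hmem := sqrt_mem hθ
  have hs1 : s < 1 := hmem.2
  have hs2 : s ^ 2 = 1 - 2 / θ := Real.sq_sqrt (by
    rw [sub_nonneg, div_le_one hθ0]; exact hθ)
  have key : θ * (1 - s ^ 2) = 2 := by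
    rw [hs2]; field_simp; ring
  have h1s : (1:ℝ) - s ≠ 0 := by intro h; linarith [hs1]; 
  unfold g f
  rw [← hs]
  have : θ / 2 - 1 / 2 + θ / 2 * s = 1 / (1 - s) - 1 / 2 := by
    field_simp
    nlinarith [key]
  linarith [this]

theorem g_strictMonoOn : StrictMonoOn g (Set.Ici (2 : ℝ)) := by
  intro a ha b hb hab
  rw [g_eq_f ha, g_eq_f hb]
  apply f_mono (sqrt_mem ha) (sqrt_mem hb)
  apply Real.sqrt_lt_sqrt
  · rw [sub_nonneg, div_le_one (by linarith [Set.mem_Ici.mp ha] : (0:ℝ) < a)]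
    exact ha
  · have ha0 : (0:ℝ) < a := by linarith [Set.mem_Ici.mp ha]
    have : 2 / b < 2 / a := by
      apply div_lt_div_of_pos_left (by norm_num) ha0 hab
    linarith
end

section
/- The function g(θ) = θ/2 - 1/2 + (θ/2)√(1 - 2/θ) + log(1/2 - (1/2)√(1 - 2/θ)) satisfies g(2) < 0 and g(3) > 0, and hence has a unique zero θ_c in [2, ∞). -/
lemma phi_anti {x y : ℝ} (hx : 0 < x) (hxy : x < y) (hy : y ≤ 1) :
    1 / y + Real.log y < 1 / x + Real.log x := by
  have hy0 : 0 < y := hx.trans hxy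
  have hne : y / x ≠ 1 := by
    intro h
    have : y = x := by field_simp at h; linarith
    linarith
  have h1 : Real.log (y / x) < y / x - 1 :=
    Real.log_lt_sub_one_of_pos (by positivity) hne
  have h2 : Real.log (y / x) = Real.log y - Real.log x :=
    Real.log_div hy0.ne' hx.ne'
  have h3 : y / x - 1 = (y - x) / x := by field_simp
  have h4 : (y - x) / x ≤ (y - x) / (x * y) := by
    rw [div_le_div_iff₀ hx (by positivity)]
    nlinarith [mul_nonneg (by linarith : (0:ℝ) ≤ y - x) (by nlinarith : (0:ℝ) ≤ x - x * y)]
  have h5 : (y - x) / (x * y) = 1 / x - 1 / y := by field_simp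
  linarith [h1, h4]

lemma sqrt_facts {θ : ℝ} (hθ : 2 ≤ θ) :
    Real.sqrt (1 - 2 / θ) ^ 2 = 1 - 2 / θ ∧ Real.sqrt (1 - 2 / θ) < 1 := by
  have hθ0 : (0:ℝ) < θ := by linarith
  have h1 : (0:ℝ) ≤ 1 - 2 / θ := by
    rw [sub_nonneg, div_le_one hθ0]; exact hθ
  have hsq : Real.sqrt (1 - 2 / θ) ^ 2 = 1 - 2 / θ := Real.sq_sqrt h1
  refine ⟨hsq, ?_⟩
  have h2 : 1 - 2 / θ < 1 := by
    have : 0 < 2 / θ := by positivity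
    linarith
  nlinarith [Real.sqrt_nonneg (1 - 2 / θ)]

lemma g_eq {θ : ℝ} (hθ : 2 ≤ θ) :
    g θ = 1 / (1 - Real.sqrt (1 - 2 / θ)) + Real.log (1 - Real.sqrt (1 - 2 / θ))
      - 1 / 2 - Real.log 2 := by
  obtain ⟨hsq, hs1⟩ := sqrt_facts hθ
  set s := Real.sqrt (1 - 2 / θ) with hs
  have hθ0 : (0:ℝ) < θ := by linarith
  have h1s : 0 < 1 - s := by linarith
  have hlog : Real.log (1 / 2 - 1 / 2 * s) = Real.log (1 - s) - Real.log 2 := by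
    rw [show (1:ℝ) / 2 - 1 / 2 * s = (1 - s) / 2 by ring,
      Real.log_div h1s.ne' two_ne_zero]
  have hkey : θ / 2 + θ / 2 * s = 1 / (1 - s) := by
    have hts : θ * s ^ 2 = θ - 2 := by rw [hsq]; field_simp
    rw [eq_div_iff h1s.ne']
    nlinarith
  unfold g
  rw [hlog]
  linarith

lemma g_mono : StrictMonoOn g (Set.Ici (2:ℝ)) := by
  intro a ha b hb hab
  have ha2 : 2 ≤ a := ha
  have hb2 : 2 ≤ b := hb
  obtain ⟨hsa, hsa1⟩ := sqrt_facts ha2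
  obtain ⟨hsb, hsb1⟩ := sqrt_facts hb2
  have ha0 : (0:ℝ) < a := by linarith
  have hb0 : (0:ℝ) < b := by linarith
  have hlt : 1 - 2 / a < 1 - 2 / b := by
    have : 2 / b < 2 / a := by
      apply div_lt_div_of_pos_left (by norm_num) ha0 hab
    linarith
  have hslt : Real.sqrt (1 - 2 / a) < Real.sqrt (1 - 2 / b) := by
    apply Real.sqrt_lt_sqrt _ hlt
    rw [sub_nonneg, div_le_one ha0]; exact ha2
  have h := phi_anti (x := 1 - Real.sqrt (1 - 2 / b)) (y := 1 - Real.sqrt (1 - 2 / a))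
    (by linarith) (by linarith) (by linarith [Real.sqrt_nonneg (1 - 2 / a)])
  rw [g_eq ha2, g_eq hb2]
  linarith

lemma g_cont : ContinuousOn g (Set.Icc (2:ℝ) 3) := by
  have hne : ∀ θ ∈ Set.Icc (2:ℝ) 3, θ ≠ 0 := fun θ hθ => by
    have := hθ.1; intro h; rw [h] at this; norm_num at this
  have hin : ContinuousOn (fun θ : ℝ => 1 - 2 / θ) (Set.Icc (2:ℝ) 3) :=
    continuousOn_const.sub (continuousOn_const.div continuousOn_id hne)
  have hsqrt : ContinuousOn (fun θ : ℝ => Real.sqrt (1 - 2 / θ)) (Set.Icc (2:ℝ) 3) :=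
    hin.sqrt
  have harg : ∀ θ ∈ Set.Icc (2:ℝ) 3,
      (1:ℝ) / 2 - 1 / 2 * Real.sqrt (1 - 2 / θ) ≠ 0 := by
    intro θ hθ
    obtain ⟨_, hs1⟩ := sqrt_facts hθ.1
    intro h
    nlinarith
  unfold g
  exact (((continuousOn_id.div_const 2).sub continuousOn_const).add
      ((continuousOn_id.div_const 2).mul hsqrt)).add
    ((continuousOn_const.sub (continuousOn_const.mul hsqrt)).log harg)

lemma g_two_neg : g 2 < 0 := by
  have h : (1:ℝ) - 2 / 2 = 0 := by norm_num
  unfold g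
  rw [h, Real.sqrt_zero]
  rw [show (1:ℝ) / 2 - 1 / 2 * 0 = 2⁻¹ by norm_num, Real.log_inv]
  have := Real.log_two_gt_d9
  linarith

lemma g_three_pos : g 3 > 0 := by
  have h13 : (1:ℝ) - 2 / 3 = 1 / 3 := by norm_num
  unfold g
  rw [h13]
  set s := Real.sqrt (1 / 3 : ℝ) with hs
  have hslo : (0.577 : ℝ) < s := by
    rw [hs, show (0.577:ℝ) = Real.sqrt (0.577^2) by
      rw [Real.sqrt_sq]; norm_num]
    apply Real.sqrt_lt_sqrt (by positivity)
    norm_num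
  have hshi : s < 0.58 := by
    rw [hs]
    rw [show (0.58:ℝ) = Real.sqrt (0.58^2) by rw [Real.sqrt_sq]; norm_num]
    apply Real.sqrt_lt_sqrt (by norm_num)
    norm_num
  have he : (2.7182818283 : ℝ) < Real.exp 1 := Real.exp_one_gt_d9
  have harg : 1 / (2 * Real.exp 1) < 1 / 2 - 1 / 2 * s := by
    rw [div_lt_iff₀ (by positivity)]
    nlinarith
  have hlog : Real.log (1 / (2 * Real.exp 1)) < Real.log (1 / 2 - 1 / 2 * s) :=
    Real.log_lt_log (by positivity) harg
  have hval : Real.log (1 / (2 * Real.exp 1)) = -(Real.log 2 + 1) := by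
    rw [one_div, Real.log_inv, Real.log_mul (by norm_num) (Real.exp_ne_zero 1),
      Real.log_exp]
  rw [hval] at hlog
  have h2 := Real.log_two_lt_d9
  nlinarith

theorem g_has_unique_zero :
    g 2 < 0 ∧ g 3 > 0 ∧ ∃! θc : ℝ, θc ∈ Set.Ici (2 : ℝ) ∧ g θc = 0 := by
  refine ⟨g_two_neg, g_three_pos, ?_⟩
  obtain ⟨θc, hmem, heq⟩ := intermediate_value_Icc (by norm_num : (2:ℝ) ≤ 3) g_cont
    ⟨g_two_neg.le, g_three_pos.le⟩
  refine ⟨θc, ⟨hmem.1, heq⟩, ?_⟩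
  rintro x ⟨hx, hgx⟩
  exact g_mono.injOn hx hmem.1 (by rw [hgx, heq])
end
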